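/- For the singular strategy k* = 0 of the mean-field migration adaptive dynamics, the convergence-stability derivative satisfies g'(0) = exp(-β²/4)·(β² - 1 - 4c)/2; hence k* = 0 is convergent stable (g'(0) < 0) if and only if c > (β² - 1)/4. -/

import Mathlib

/-- Convergence stability of the fully social singular strategy `k* = 0`: with
selection gradient
`g(k) = -exp(-G(k,k)) · ( k(1-k)(1+β²(k-1))/(2(2k²-2k+1)²) + 2ck )`, where
`G(k,k) = (k² + (1-k)³β²)/(4(2k²-2k+1)) + ck²`, the derivative of `g` at `0` is
`exp(-β²/4)·(β² - 1 - 4c)/2`; hence `g'(0) < 0` iff `c > (β² - 1)/4`. -/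
theorem convergence_stability_at_zero
    (β c : ℝ) (hβ : 1 < β) (hc : 0 < c)
    (g : ℝ → ℝ)
    (hg : ∀ k, g k = -Real.exp (-((k ^ 2 + (1 - k) ^ 3 * β ^ 2)
          / (4 * (2 * k ^ 2 - 2 * k + 1)) + c * k ^ 2)) *
      (k * (1 - k) * (1 + β ^ 2 * (k - 1)) / (2 * (2 * k ^ 2 - 2 * k + 1) ^ 2)
        + 2 * c * k)) :
    HasDerivAt g (Real.exp (-β ^ 2 / 4) * (β ^ 2 - 1 - 4 * c) / 2) 0 ∧
    (Real.exp (-β ^ 2 / 4) * (β ^ 2 - 1 - 4 * c) / 2 < 0 ↔ (β ^ 2 - 1) / 4 < c) := by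
  constructor
  · have hgeq : g = fun k => -Real.exp (-((k ^ 2 + (1 - k) ^ 3 * β ^ 2)
          / (4 * (2 * k ^ 2 - 2 * k + 1)) + c * k ^ 2)) *
      (k * (1 - k) * (1 + β ^ 2 * (k - 1)) / (2 * (2 * k ^ 2 - 2 * k + 1) ^ 2)
        + 2 * c * k) := funext hg
    rw [hgeq]
    -- basic pieces at 0
    have hid : HasDerivAt (fun k : ℝ => k) 1 0 := hasDerivAt_id 0
    have hk2 : HasDerivAt (fun k : ℝ => k ^ 2) 0 0 := by
      simpa using hasDerivAt_pow 2 (0 : ℝ)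
    have h1k : HasDerivAt (fun k : ℝ => 1 - k) (-1) 0 := by
      simpa using hid.const_sub 1
    have h1k3 : HasDerivAt (fun k : ℝ => (1 - k) ^ 3) (-3) 0 := by
      have := h1k.pow 3
      norm_num at this
      exact this
    have hD : HasDerivAt (fun k : ℝ => 2 * k ^ 2 - 2 * k + 1) (-2) 0 := by
      have := ((hk2.const_mul 2).sub (hid.const_mul 2)).add_const 1
      exact this.congr_deriv (by norm_num)
    -- A = exponent inner function
    have hN1 : HasDerivAt (fun k : ℝ => k ^ 2 + (1 - k) ^ 3 * β ^ 2)
        (-3 * β ^ 2) 0 := by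
      have := hk2.add (h1k3.mul_const (β ^ 2))
      refine this.congr_deriv ?_
      ring
    have hD4 : HasDerivAt (fun k : ℝ => 4 * (2 * k ^ 2 - 2 * k + 1)) (-8) 0 := by
      have := hD.const_mul 4
      refine this.congr_deriv ?_
      ring
    have hD4ne : (fun k : ℝ => 4 * (2 * k ^ 2 - 2 * k + 1)) 0 ≠ 0 := by norm_num
    have hA : HasDerivAt (fun k : ℝ => (k ^ 2 + (1 - k) ^ 3 * β ^ 2)
        / (4 * (2 * k ^ 2 - 2 * k + 1)) + c * k ^ 2) (-β ^ 2 / 4) 0 := by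
      have hdiv := hN1.div hD4 hD4ne
      have := hdiv.add (hk2.const_mul c)
      refine this.congr_deriv ?_
      norm_num
      ring
    have hE : HasDerivAt (fun k : ℝ => -Real.exp (-((k ^ 2 + (1 - k) ^ 3 * β ^ 2)
        / (4 * (2 * k ^ 2 - 2 * k + 1)) + c * k ^ 2)))
        (-(Real.exp (-β ^ 2 / 4) * (β ^ 2 / 4))) 0 := by
      have := (hA.neg.exp).neg
      refine this.congr_deriv ?_
      simp [neg_div]
    -- B
    have hN2 : HasDerivAt (fun k : ℝ => k * (1 - k) * (1 + β ^ 2 * (k - 1)))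
        (1 - β ^ 2) 0 := by
      have hw : HasDerivAt (fun k : ℝ => 1 + β ^ 2 * (k - 1)) (β ^ 2) 0 := by
        have := ((hid.sub_const 1).const_mul (β ^ 2)).const_add 1
        simpa using this
      have := (hid.mul h1k).mul hw
      refine this.congr_deriv ?_
      norm_num
      ring
    have hD2 : HasDerivAt (fun k : ℝ => 2 * (2 * k ^ 2 - 2 * k + 1) ^ 2) (-8) 0 := by
      have := (hD.pow 2).const_mul 2
      norm_num at this
      convert this using 1
    have hD2ne : (fun k : ℝ => 2 * (2 * k ^ 2 - 2 * k + 1) ^ 2) 0 ≠ 0 := by norm_num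
    have hB : HasDerivAt (fun k : ℝ => k * (1 - k) * (1 + β ^ 2 * (k - 1))
        / (2 * (2 * k ^ 2 - 2 * k + 1) ^ 2) + 2 * c * k)
        ((1 - β ^ 2) / 2 + 2 * c) 0 := by
      have hdiv := hN2.div hD2 hD2ne
      have := hdiv.add (hid.const_mul (2 * c))
      refine this.congr_deriv ?_
      norm_num
      ring
    have := hE.mul hB
    refine this.congr_deriv ?_
    norm_num
    ring
  · have he := Real.exp_pos (-β ^ 2 / 4)
    constructor <;> intro h <;> nlinarith [he]
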